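/- Let d₁,…,d_n > 0 and h₁,…,h_n ≥ 0 not all zero. Then for all b ≥ 0, (Σₙ hₙ²dₙ/(1+b dₙ)²) / (Σₙ hₙ²/(1+b dₙ))² ≥ 1/(Σₙ hₙ²/dₙ), with the limit as b → ∞ equal to 1/(Σₙ hₙ²/dₙ). -/

import Mathlib

open Filter Real

theorem sar_function_infimum
    (n : ℕ) (d h : Fin n → ℝ) (hd : ∀ i, 0 < d i) (hh : ∀ i, 0 ≤ h i)
    (hne : ∃ i, h i ≠ 0)
    (f : ℝ → ℝ)
    (hf : ∀ b, f b = (∑ i, h i ^ 2 * d i / (1 + b * d i) ^ 2) /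
        (∑ i, h i ^ 2 / (1 + b * d i)) ^ 2) :
    (∀ b : ℝ, 0 ≤ b → 1 / (∑ i, h i ^ 2 / d i) ≤ f b) ∧
    Filter.Tendsto f Filter.atTop (nhds (1 / (∑ i, h i ^ 2 / d i))) := by
  have hS : 0 < ∑ i, h i ^ 2 / d i := by
    obtain ⟨j, hj⟩ := hne
    refine Finset.sum_pos' (fun i _ => by have := hd i; positivity)
      ⟨j, Finset.mem_univ j, ?_⟩
    have := hd j; positivity
  constructor
  · intro b hb
    have hpos : ∀ i, 0 < 1 + b * d i := fun i => by nlinarith [hd i]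
    rw [hf]
    have hB : 0 < ∑ i, h i ^ 2 / (1 + b * d i) := by
      obtain ⟨j, hj⟩ := hne
      refine Finset.sum_pos' (fun i _ => by have := hpos i; positivity)
        ⟨j, Finset.mem_univ j, ?_⟩
      have := hpos j; positivity
    rw [div_le_div_iff₀ hS (by positivity)]
    have key := Finset.sum_mul_sq_le_sq_mul_sq Finset.univ
      (fun i => h i * Real.sqrt (d i) / (1 + b * d i))
      (fun i => h i / Real.sqrt (d i))
    have e1 : (∑ i, (h i * Real.sqrt (d i) / (1 + b * d i)) * (h i / Real.sqrt (d i)))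
        = ∑ i, h i ^ 2 / (1 + b * d i) := by
      refine Finset.sum_congr rfl fun i _ => ?_
      have hs : Real.sqrt (d i) ≠ 0 := by have := hd i; positivity
      have : h i * Real.sqrt (d i) / (1 + b * d i) * (h i / Real.sqrt (d i))
          = h i ^ 2 * (Real.sqrt (d i) / Real.sqrt (d i)) / (1 + b * d i) := by ring
      rw [this, div_self hs, mul_one]
    have e2 : (∑ i, (h i * Real.sqrt (d i) / (1 + b * d i)) ^ 2)
        = ∑ i, h i ^ 2 * d i / (1 + b * d i) ^ 2 := by
      refine Finset.sum_congr rfl fun i _ => ?_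
      rw [div_pow, mul_pow, Real.sq_sqrt (hd i).le]
    have e3 : (∑ i, (h i / Real.sqrt (d i)) ^ 2) = ∑ i, h i ^ 2 / d i := by
      refine Finset.sum_congr rfl fun i _ => ?_
      rw [div_pow, Real.sq_sqrt (hd i).le]
    rw [e1, e2, e3] at key
    linarith
  · have hlim : ∀ c : ℝ, 0 < c →
        Tendsto (fun b : ℝ => b / (1 + b * c)) atTop (nhds (1 / c)) := by
      intro c hc
      have h1 : Tendsto (fun b : ℝ => 1 / (b⁻¹ + c)) atTop (nhds (1 / (0 + c))) := by
        refine Tendsto.div tendsto_const_nhds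
          (tendsto_inv_atTop_zero.add tendsto_const_nhds) (by positivity)
      rw [zero_add] at h1
      refine h1.congr' ?_
      filter_upwards [eventually_gt_atTop 0] with b hb
      have h2 : 0 < 1 + b * c := by nlinarith
      have e : b⁻¹ + c = (1 + b * c) / b := by
        rw [eq_div_iff hb.ne']
        field_simp
      rw [e, one_div_div]
    set S := ∑ i, h i ^ 2 / d i with hSdef
    have hSeq : (∑ i, h i ^ 2 * d i * (1 / d i) ^ 2) = S := by
      refine Finset.sum_congr rfl fun i _ => ?_
      have := (hd i).ne'
      field_simp
    have hSeq2 : (∑ i, h i ^ 2 * (1 / d i)) = S := by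
      refine Finset.sum_congr rfl fun i _ => ?_
      rw [mul_one_div]
    have hN : Tendsto (fun b => ∑ i, h i ^ 2 * d i * (b / (1 + b * d i)) ^ 2)
        atTop (nhds S) := by
      rw [← hSeq]
      exact tendsto_finset_sum _ fun i _ =>
        tendsto_const_nhds.mul ((hlim (d i) (hd i)).pow 2)
    have hD : Tendsto (fun b => (∑ i, h i ^ 2 * (b / (1 + b * d i))) ^ 2)
        atTop (nhds (S ^ 2)) := by
      refine Tendsto.pow ?_ 2
      rw [← hSeq2]
      exact tendsto_finset_sum _ fun i _ => tendsto_const_nhds.mul (hlim (d i) (hd i))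
    have hdiv := hN.div hD (by positivity)
    have hval : S / S ^ 2 = 1 / S := by
      rw [pow_two, ← div_div, div_self hS.ne']
    rw [hval] at hdiv
    refine hdiv.congr' ?_
    filter_upwards [eventually_gt_atTop 0] with b hb
    have hpos : ∀ i, 0 < 1 + b * d i := fun i => by nlinarith [hd i]
    have hb2 : (b ^ 2 : ℝ) ≠ 0 := by positivity
    simp only [Pi.div_apply]
    rw [hf]
    have eN : (∑ i, h i ^ 2 * d i * (b / (1 + b * d i)) ^ 2)
        = b ^ 2 * ∑ i, h i ^ 2 * d i / (1 + b * d i) ^ 2 := by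
      rw [Finset.mul_sum]
      refine Finset.sum_congr rfl fun i _ => ?_
      have := (hpos i).ne'
      field_simp
    have eD : (∑ i, h i ^ 2 * (b / (1 + b * d i))) ^ 2
        = b ^ 2 * (∑ i, h i ^ 2 / (1 + b * d i)) ^ 2 := by
      have : (∑ i, h i ^ 2 * (b / (1 + b * d i))) = b * ∑ i, h i ^ 2 / (1 + b * d i) := by
        rw [Finset.mul_sum]
        refine Finset.sum_congr rfl fun i _ => by ring
      rw [this, mul_pow]
    rw [eN, eD, mul_div_mul_left _ _ hb2]
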